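/- Let ρ_1, …, ρ_n be star-shaped risk measures satisfying the normality condition Σ_{i=1}^n ρ_i(Z_i) ≥ 0 whenever Σ_{i=1}^n Z_i = 0, and for each i let Γ_i be a set of convex risk measures with ρ_i(X) = min_{γ∈Γ_i} γ(X) for all X ∈ 𝒳 (minima attained). Then for every family (γ_1,…,γ_n) ∈ Γ_1×⋯×Γ_n the inf-convolution □_i γ_i is a well-defined (real-valued) convex risk measure dominating ρ_⋄ = □_i ρ_i, and for every X ∈ 𝒳, ρ_⋄(X) = inf{ (□_{i=1}^n γ_i)(X) : γ_i ∈ Γ_i for all i }. Moreover, if the infimum defining ρ_⋄(X) is attained by some decomposition Σ Y_i = X, then this infimum over families (γ_i) is also attained. -/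
import Mathlib


open BoundedContinuousFunction

def IsRiskMeasure {Ω : Type*} [TopologicalSpace Ω] (ρ : (Ω →ᵇ ℝ) → ℝ) : Prop :=
  (∀ X Y : Ω →ᵇ ℝ, Y ≤ X → ρ Y ≤ ρ X) ∧
  (∀ (X : Ω →ᵇ ℝ) (m : ℝ), ρ (X - const Ω m) = ρ X - m) ∧
  ρ 0 = 0

def IsStarShaped {Ω : Type*} [TopologicalSpace Ω] (ρ : (Ω →ᵇ ℝ) → ℝ) : Prop :=
  ∀ (X : Ω →ᵇ ℝ) (l : ℝ), 1 < l → l * ρ X ≤ ρ (l • X)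

def IsConvex {Ω : Type*} [TopologicalSpace Ω] (ρ : (Ω →ᵇ ℝ) → ℝ) : Prop :=
  ∀ (X Y : Ω →ᵇ ℝ) (t : ℝ), t ∈ Set.Icc (0 : ℝ) 1 →
    ρ (t • X + (1 - t) • Y) ≤ t * ρ X + (1 - t) * ρ Y

/-- The set of values of decompositions of `X` appearing in the inf-convolution. -/
def infConvValues {Ω : Type*} [TopologicalSpace Ω] {n : ℕ}
    (ρ : Fin n → (Ω →ᵇ ℝ) → ℝ) (X : Ω →ᵇ ℝ) : Set ℝ :=
  {s : ℝ | ∃ Y : Fin n → (Ω →ᵇ ℝ), (∑ i, Y i) = X ∧ s = ∑ i, ρ i (Y i)}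

/-- The inf-convolution `□_i ρ_i`. -/
noncomputable def infConv {Ω : Type*} [TopologicalSpace Ω] {n : ℕ}
    (ρ : Fin n → (Ω →ᵇ ℝ) → ℝ) (X : Ω →ᵇ ℝ) : ℝ :=
  sInf (infConvValues ρ X)

private lemma sum_update_grp {n : ℕ} {V : Type*} [AddCommGroup V] (f : Fin n → V) (j : Fin n)
    (b : V) : ∑ i, Function.update f j b i = ∑ i, f i - f j + b := by
  rw [Finset.sum_update_of_mem (Finset.mem_univ j), Finset.sdiff_singleton_eq_erase,
    Finset.sum_erase_eq_sub (Finset.mem_univ j)]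
  abel

private lemma sum_comp_update {n : ℕ} {α : Type*} (τ : Fin n → α → ℝ) (Y : Fin n → α)
    (j : Fin n) (b : α) :
    ∑ i, τ i (Function.update Y j b i) = ∑ i, τ i (Y i) - τ j (Y j) + τ j b := by
  have h : (fun i => τ i (Function.update Y j b i))
      = Function.update (fun i => τ i (Y i)) j (τ j b) := by
    funext i
    by_cases hij : i = j
    · subst hij; simp
    · simp [Function.update_of_ne hij]
  calc ∑ i, τ i (Function.update Y j b i)
      = ∑ i, Function.update (fun i => τ i (Y i)) j (τ j b) i := by rw [← h]
    _ = ∑ i, τ i (Y i) - τ j (Y j) + τ j b := sum_update_grp _ j _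

theorem infConvolution_representation
    {Ω : Type*} [TopologicalSpace Ω] [DiscreteTopology Ω] [Nonempty Ω]
    {n : ℕ} (hn : 0 < n) (ρ : Fin n → (Ω →ᵇ ℝ) → ℝ)
    (hrm : ∀ i, IsRiskMeasure (ρ i)) (hss : ∀ i, IsStarShaped (ρ i))
    (hnorm : ∀ Z : Fin n → (Ω →ᵇ ℝ), (∑ i, Z i) = 0 → 0 ≤ ∑ i, ρ i (Z i))
    (Γ : Fin n → Set ((Ω →ᵇ ℝ) → ℝ))
    (hΓ : ∀ i, ∀ γ ∈ Γ i, IsRiskMeasure γ ∧ IsConvex γ)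
    (hrep : ∀ i, ∀ X : Ω →ᵇ ℝ, IsLeast {y : ℝ | ∃ γ ∈ Γ i, y = γ X} (ρ i X)) :
    -- each `□_i γ_i` is a well-defined convex risk measure dominating `ρ_⋄`
    (∀ γ : Fin n → (Ω →ᵇ ℝ) → ℝ, (∀ i, γ i ∈ Γ i) →
      (∀ X : Ω →ᵇ ℝ, (infConvValues γ X).Nonempty ∧ BddBelow (infConvValues γ X)) ∧
      IsRiskMeasure (infConv γ) ∧ IsConvex (infConv γ) ∧
      ∀ X : Ω →ᵇ ℝ, infConv ρ X ≤ infConv γ X) ∧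
    -- `ρ_⋄(X) = inf { (□_i γ_i)(X) : γ_i ∈ Γ_i }`
    (∀ X : Ω →ᵇ ℝ,
      infConv ρ X =
        sInf {y : ℝ | ∃ γ : Fin n → (Ω →ᵇ ℝ) → ℝ,
          (∀ i, γ i ∈ Γ i) ∧ y = infConv γ X}) ∧
    -- attainment: if the infimum defining `ρ_⋄(X)` is attained, so is the one over `(γ_i)`
    (∀ X : Ω →ᵇ ℝ,
      (∃ Y : Fin n → (Ω →ᵇ ℝ), (∑ i, Y i) = X ∧ infConv ρ X = ∑ i, ρ i (Y i)) →
      ∃ γ : Fin n → (Ω →ᵇ ℝ) → ℝ, (∀ i, γ i ∈ Γ i) ∧ infConv γ X = infConv ρ X) := by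
  classical
  set j : Fin n := ⟨0, hn⟩ with hjdef
  -- ρ i is dominated by every γ ∈ Γ i
  have hρle : ∀ i (γ : (Ω →ᵇ ℝ) → ℝ), γ ∈ Γ i → ∀ X, ρ i X ≤ γ X := by
    intro i γ hγ X
    exact (hrep i X).2 ⟨γ, hγ, rfl⟩
  -- a canonical decomposition
  have hmem : ∀ (τ : Fin n → (Ω →ᵇ ℝ) → ℝ), (∀ i, τ i 0 = 0) → ∀ X : Ω →ᵇ ℝ,
      τ j X ∈ infConvValues τ X := by
    intro τ h0 X
    refine ⟨Pi.single j X, by simp [Finset.sum_pi_single'], ?_⟩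
    rw [Finset.sum_eq_single j]
    · simp
    · intro i _ hi
      rw [Pi.single_eq_of_ne hi, h0 i]
    · intro h; exact absurd (Finset.mem_univ j) h
  -- lower bound for the values of ρ
  have hlbρ : ∀ (X : Ω →ᵇ ℝ), ∀ s ∈ infConvValues ρ X, -‖X‖ ≤ s := by
    rintro X s ⟨Y, hY, rfl⟩
    have h0 : (∑ i, Function.update Y j (Y j - X) i) = 0 := by
      rw [sum_update_grp, hY]; abel
    have h1 := hnorm _ h0
    rw [sum_comp_update] at h1
    have hb : ρ j (Y j - X) ≤ ρ j (Y j) + ‖X‖ := by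
      have hle : Y j - X ≤ Y j - const Ω (-‖X‖) := by
        intro ω
        have := abs_le.mp (X.norm_coe_le_norm ω)
        show (Y j) ω - X ω ≤ (Y j) ω - const Ω (-‖X‖) ω
        simp only [BoundedContinuousFunction.const_apply]
        linarith [this.1]
      have := (hrm j).1 _ _ hle
      rw [(hrm j).2.1] at this
      linarith
    linarith
  have hneρ : ∀ X : Ω →ᵇ ℝ, (infConvValues ρ X).Nonempty :=
    fun X => ⟨_, hmem ρ (fun i => (hrm i).2.2) X⟩
  have hbddρ : ∀ X : Ω →ᵇ ℝ, BddBelow (infConvValues ρ X) :=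
    fun X => ⟨-‖X‖, fun s hs => hlbρ X s hs⟩
  -- main part: properties of infConv γ for a fixed admissible family γ
  have main : ∀ γ : Fin n → (Ω →ᵇ ℝ) → ℝ, (∀ i, γ i ∈ Γ i) →
      (∀ X : Ω →ᵇ ℝ, (infConvValues γ X).Nonempty ∧ BddBelow (infConvValues γ X)) ∧
      IsRiskMeasure (infConv γ) ∧ IsConvex (infConv γ) ∧
      ∀ X : Ω →ᵇ ℝ, infConv ρ X ≤ infConv γ X := by
    intro γ hγ
    have hγrm : ∀ i, IsRiskMeasure (γ i) := fun i => (hΓ i _ (hγ i)).1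
    have hγcx : ∀ i, IsConvex (γ i) := fun i => (hΓ i _ (hγ i)).2
    -- each value of γ dominates a value of ρ
    have hvaldom : ∀ (X : Ω →ᵇ ℝ), ∀ s ∈ infConvValues γ X, infConv ρ X ≤ s := by
      rintro X s ⟨Y, hY, rfl⟩
      have h1 : ∑ i, ρ i (Y i) ≤ ∑ i, γ i (Y i) :=
        Finset.sum_le_sum (fun i _ => hρle i _ (hγ i) (Y i))
      have h2 : infConv ρ X ≤ ∑ i, ρ i (Y i) := csInf_le (hbddρ X) ⟨Y, hY, rfl⟩
      linarith
    have hne : ∀ X : Ω →ᵇ ℝ, (infConvValues γ X).Nonempty :=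
      fun X => ⟨_, hmem γ (fun i => (hγrm i).2.2) X⟩
    have hbdd : ∀ X : Ω →ᵇ ℝ, BddBelow (infConvValues γ X) :=
      fun X => ⟨infConv ρ X, fun s hs => hvaldom X s hs⟩
    have hdom : ∀ X : Ω →ᵇ ℝ, infConv ρ X ≤ infConv γ X :=
      fun X => le_csInf (hne X) (hvaldom X)
    -- monotonicity
    have hmono : ∀ X Y : Ω →ᵇ ℝ, Y ≤ X → infConv γ Y ≤ infConv γ X := by
      intro X Y hYX
      apply le_csInf (hne X)
      rintro s ⟨A, hA, rfl⟩
      set B := Function.update A j (A j - (X - Y)) with hBdef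
      have hB : ∑ i, B i = Y := by rw [hBdef, sum_update_grp, hA]; abel
      have h1 : infConv γ Y ≤ ∑ i, γ i (B i) := csInf_le (hbdd Y) ⟨B, hB, rfl⟩
      have h2 : γ j (A j - (X - Y)) ≤ γ j (A j) := by
        apply (hγrm j).1
        intro ω
        have : Y ω ≤ X ω := hYX ω
        show (A j) ω - (X ω - Y ω) ≤ (A j) ω
        linarith
      have h3 : ∑ i, γ i (B i) ≤ ∑ i, γ i (A i) := by
        rw [hBdef, sum_comp_update]
        linarith
      linarith
    -- translation (one direction, then equality)
    have htr_le : ∀ (X : Ω →ᵇ ℝ) (m : ℝ),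
        infConv γ (X - const Ω m) + m ≤ infConv γ X := by
      intro X m
      apply le_csInf (hne X)
      rintro s ⟨A, hA, rfl⟩
      set B := Function.update A j (A j - const Ω m) with hBdef
      have hB : ∑ i, B i = X - const Ω m := by rw [hBdef, sum_update_grp, hA]; abel
      have h1 : infConv γ (X - const Ω m) ≤ ∑ i, γ i (B i) :=
        csInf_le (hbdd _) ⟨B, hB, rfl⟩
      have h2 : ∑ i, γ i (B i) = ∑ i, γ i (A i) - m := by
        rw [hBdef, sum_comp_update, (hγrm j).2.1]; ring
      linarith
    have htr : ∀ (X : Ω →ᵇ ℝ) (m : ℝ),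
        infConv γ (X - const Ω m) = infConv γ X - m := by
      intro X m
      have h1 := htr_le X m
      have h2 := htr_le (X - const Ω m) (-m)
      have h3 : (X - const Ω m) - const Ω (-m) = X := by
        ext ω
        simp only [BoundedContinuousFunction.coe_sub, Pi.sub_apply,
          BoundedContinuousFunction.const_apply]
        ring
      rw [h3] at h2
      linarith
    -- normalization
    have hz : infConv γ 0 = 0 := by
      apply le_antisymm
      · have h1 := csInf_le (hbdd 0) (hmem γ (fun i => (hγrm i).2.2) 0)
        rwa [(hγrm j).2.2] at h1
      · apply le_csInf (hne 0)
        rintro s ⟨Y, hY, rfl⟩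
        have h1 : 0 ≤ ∑ i, ρ i (Y i) := hnorm Y hY
        have h2 : ∑ i, ρ i (Y i) ≤ ∑ i, γ i (Y i) :=
          Finset.sum_le_sum (fun i _ => hρle i _ (hγ i) (Y i))
        linarith
    -- convexity
    have hcx : IsConvex (infConv γ) := by
      intro X Y t ht
      obtain ⟨ht0, ht1⟩ := ht
      have key : ∀ s ∈ infConvValues γ X, ∀ s' ∈ infConvValues γ Y,
          infConv γ (t • X + (1 - t) • Y) ≤ t * s + (1 - t) * s' := by
        rintro s ⟨A, hA, rfl⟩ s' ⟨B, hB, rfl⟩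
        set C := fun i => t • A i + (1 - t) • B i with hCdef
        have hC : ∑ i, C i = t • X + (1 - t) • Y := by
          rw [hCdef, Finset.sum_add_distrib, ← Finset.smul_sum, ← Finset.smul_sum, hA, hB]
        have h1 : infConv γ (t • X + (1 - t) • Y) ≤ ∑ i, γ i (C i) :=
          csInf_le (hbdd _) ⟨C, hC, rfl⟩
        have h2 : ∑ i, γ i (C i) ≤ ∑ i, (t * γ i (A i) + (1 - t) * γ i (B i)) :=
          Finset.sum_le_sum (fun i _ => hγcx i (A i) (B i) t ⟨ht0, ht1⟩)
        rw [Finset.sum_add_distrib, ← Finset.mul_sum, ← Finset.mul_sum] at h2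
        linarith
      apply le_of_forall_pos_le_add
      intro ε hε
      obtain ⟨s, hsmem, hslt⟩ := Real.lt_sInf_add_pos (hne X) (half_pos hε)
      obtain ⟨s', hs'mem, hs'lt⟩ := Real.lt_sInf_add_pos (hne Y) (half_pos hε)
      have h1 := key s hsmem s' hs'mem
      have h2 : t * s + (1 - t) * s'
          ≤ t * (infConv γ X + ε / 2) + (1 - t) * (infConv γ Y + ε / 2) :=
        add_le_add (mul_le_mul_of_nonneg_left hslt.le ht0)
          (mul_le_mul_of_nonneg_left hs'lt.le (by linarith))
      have h3 : t * (infConv γ X + ε / 2) + (1 - t) * (infConv γ Y + ε / 2)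
          = t * infConv γ X + (1 - t) * infConv γ Y + ε / 2 := by ring
      linarith
    exact ⟨fun X => ⟨hne X, hbdd X⟩, ⟨hmono, htr, hz⟩, hcx, hdom⟩
  refine ⟨main, ?_, ?_⟩
  · -- the representation
    intro X
    have hch : ∀ i, ∃ γ ∈ Γ i, ρ i 0 = γ 0 := fun i => (hrep i 0).1
    choose γ0 hγ0mem _ using hch
    set S := {y : ℝ | ∃ γ : Fin n → (Ω →ᵇ ℝ) → ℝ, (∀ i, γ i ∈ Γ i) ∧ y = infConv γ X}
      with hSdef
    have hSne : S.Nonempty := ⟨infConv γ0 X, γ0, hγ0mem, rfl⟩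
    have hSbdd : BddBelow S := by
      refine ⟨infConv ρ X, ?_⟩
      rintro y ⟨γ, hγ, rfl⟩
      exact (main γ hγ).2.2.2 X
    apply le_antisymm
    · apply le_csInf hSne
      rintro y ⟨γ, hγ, rfl⟩
      exact (main γ hγ).2.2.2 X
    · apply le_of_forall_pos_le_add
      intro ε hε
      obtain ⟨s, hsmem, hslt⟩ := Real.lt_sInf_add_pos (hneρ X) hε
      obtain ⟨Y, hY, rfl⟩ := hsmem
      choose γs hγsmem hγseq using fun i => (hrep i (Y i)).1
      have h1 : sInf S ≤ infConv γs X := csInf_le hSbdd ⟨γs, hγsmem, rfl⟩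
      have h2 : infConv γs X ≤ ∑ i, γs i (Y i) :=
        csInf_le ((main γs hγsmem).1 X).2 ⟨Y, hY, rfl⟩
      have h3 : ∑ i, γs i (Y i) = ∑ i, ρ i (Y i) :=
        Finset.sum_congr rfl (fun i _ => (hγseq i).symm)
      have h4 : infConv ρ X = sInf (infConvValues ρ X) := rfl
      linarith
  · -- attainment
    rintro X ⟨Y, hY, hval⟩
    choose γs hγsmem hγseq using fun i => (hrep i (Y i)).1
    refine ⟨γs, hγsmem, le_antisymm ?_ ((main γs hγsmem).2.2.2 X)⟩
    have h2 : infConv γs X ≤ ∑ i, γs i (Y i) :=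
      csInf_le ((main γs hγsmem).1 X).2 ⟨Y, hY, rfl⟩
    have h3 : ∑ i, γs i (Y i) = ∑ i, ρ i (Y i) :=
      Finset.sum_congr rfl (fun i _ => (hγseq i).symm)
    rw [hval]
    linarith
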